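/- Let R be a social ranking solution satisfying neutrality (NT), concatenation consistency (CCON), and all indifference all winners (AIAW). Then R satisfies independence of the decomposition of the worst sets (IDWS) if and only if R equals the S lex-cel solution R^SL. -/

import Mathlib

namespace SocRank

/-- A coalitional ranking (a weak order on a set of feasible nonempty coalitions),
represented by its list of equivalence classes, listed from best to worst. -/
structure CoalRanking (X : Type*) where
  classes : List (Finset (Finset X))
  class_nonempty : ∀ C ∈ classes, C.Nonempty
  coal_nonempty : ∀ C ∈ classes, ∀ S ∈ C, S.Nonempty
  classes_disjoint : classes.Pairwise Disjoint

namespace CoalRanking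

variable {X : Type*}

/-- The coalition domain `𝒟(≿)` of a coalitional ranking. -/
def domain [DecidableEq X] (r : CoalRanking X) : Finset (Finset X) :=
  r.classes.foldr (· ∪ ·) ∅

/-- The list of equivalence classes of the restriction of a ranking to a set `D`
of coalitions. -/
def restrictClasses [DecidableEq X] (r : CoalRanking X) (D : Finset (Finset X)) :
    List (Finset (Finset X)) :=
  (r.classes.map (· ∩ D)).filter (fun C => decide C.Nonempty)

/-- Merging two lists of equivalence classes by aligning them at the top. -/
def zipUnion [DecidableEq X] :
    List (Finset (Finset X)) → List (Finset (Finset X)) → List (Finset (Finset X))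
  | [], M => M
  | L, [] => L
  | A :: L, B :: M => (A ∪ B) :: zipUnion L M

/-- `r` is a sum of the disjoint rankings `r₁` and `r₂`: its domain is the union of
the two domains and its restriction to the domain of `rᵢ` is `rᵢ`. -/
def IsSum [DecidableEq X] (r r₁ r₂ : CoalRanking X) : Prop :=
  Disjoint r₁.domain r₂.domain ∧
  r.domain = r₁.domain ∪ r₂.domain ∧
  r.restrictClasses r₁.domain = r₁.classes ∧
  r.restrictClasses r₂.domain = r₂.classes

/-- `r` is the concatenation sum `r₁ · r₂` of the disjoint rankings `r₁` and `r₂`. -/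
def IsConcatSum [DecidableEq X] (r r₁ r₂ : CoalRanking X) : Prop :=
  Disjoint r₁.domain r₂.domain ∧ r.classes = r₁.classes ++ r₂.classes

/-- `r` is the top-aligned sum `r₁ ⊨ r₂` of the disjoint rankings `r₁` and `r₂`. -/
def IsTopAlignedSum [DecidableEq X] (r r₁ r₂ : CoalRanking X) : Prop :=
  Disjoint r₁.domain r₂.domain ∧ r.classes = zipUnion r₁.classes r₂.classes

/-- `r` is the bottom-aligned sum `r₁ ⫤ r₂` of the disjoint rankings `r₁` and `r₂`. -/
def IsBottomAlignedSum [DecidableEq X] (r r₁ r₂ : CoalRanking X) : Prop :=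
  Disjoint r₁.domain r₂.domain ∧
  r.classes = (zipUnion r₁.classes.reverse r₂.classes.reverse).reverse

/-- Renaming the individuals of a coalitional ranking by a permutation `σ` of `X`:
the ranking `≿^σ`. -/
def mapPerm [DecidableEq X] (σ : Equiv.Perm X) (r : CoalRanking X) : CoalRanking X where
  classes := r.classes.map (fun C => C.image (fun S => S.image σ))
  class_nonempty := by
    intro C hC
    simp only [List.mem_map] at hC
    obtain ⟨C₀, hC₀, rfl⟩ := hC
    exact (r.class_nonempty C₀ hC₀).image _
  coal_nonempty := by
    intro C hC S hS
    simp only [List.mem_map] at hC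
    obtain ⟨C₀, hC₀, rfl⟩ := hC
    simp only [Finset.mem_image] at hS
    obtain ⟨S₀, hS₀, rfl⟩ := hS
    exact (r.coal_nonempty C₀ hC₀ S₀ hS₀).image _
  classes_disjoint := by
    refine List.Pairwise.map _ (fun {A B} h => ?_) r.classes_disjoint
    exact (Finset.disjoint_image
      (Finset.image_injective σ.injective)).mpr h

/-- Renaming the coalitions of a coalitional ranking by a permutation `π` of the set of
coalitions (mapping nonempty sets to nonempty sets): the ranking `≿_π`. -/
def mapCoalPerm [DecidableEq X] (π : Equiv.Perm (Finset X))
    (hπ : ∀ S : Finset X, S.Nonempty → (π S).Nonempty) (r : CoalRanking X) :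
    CoalRanking X where
  classes := r.classes.map (fun C => C.image π)
  class_nonempty := by
    intro C hC
    simp only [List.mem_map] at hC
    obtain ⟨C₀, hC₀, rfl⟩ := hC
    exact (r.class_nonempty C₀ hC₀).image _
  coal_nonempty := by
    intro C hC S hS
    simp only [List.mem_map] at hC
    obtain ⟨C₀, hC₀, rfl⟩ := hC
    simp only [Finset.mem_image] at hS
    obtain ⟨S₀, hS₀, rfl⟩ := hS
    exact hπ S₀ (r.coal_nonempty C₀ hC₀ S₀ hS₀)
  classes_disjoint := by
    refine List.Pairwise.map _ (fun {A B} h => ?_) r.classes_disjoint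
    exact (Finset.disjoint_image π.injective).mpr h

end CoalRanking

open CoalRanking

variable {X : Type*}

/-- A social ranking solution: a map assigning to every coalitional ranking a binary
relation on the individuals. -/
abbrev SRSMap (X : Type*) := CoalRanking X → X → X → Prop

/-- The symmetric part `I` of the social ranking. -/
def Ind (R : SRSMap X) (r : CoalRanking X) (x y : X) : Prop := R r x y ∧ R r y x

/-- The asymmetric part `P` of the social ranking. -/
def Pref (R : SRSMap X) (r : CoalRanking X) (x y : X) : Prop := R r x y ∧ ¬ R r y x

/-- Conditions (1)-(4) of consistency for the triple `(r₁, r₂, r)`. -/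
def ConsistentAt (R : SRSMap X) (r₁ r₂ r : CoalRanking X) : Prop :=
  ∀ x y : X,
    (Ind R r₁ x y → Ind R r₂ x y → Ind R r x y) ∧
    (Ind R r₁ x y → Pref R r₂ x y → Pref R r x y) ∧
    (Pref R r₁ x y → Ind R r₂ x y → Pref R r x y) ∧
    (Pref R r₁ x y → Pref R r₂ x y → Pref R r x y)

/-- Consistency (CON). -/
def CON [DecidableEq X] (R : SRSMap X) : Prop :=
  ∀ r₁ r₂ r : CoalRanking X, IsSum r r₁ r₂ → ConsistentAt R r₁ r₂ r

/-- Concatenation consistency (CCON). -/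
def CCON [DecidableEq X] (R : SRSMap X) : Prop :=
  ∀ r₁ r₂ r : CoalRanking X, IsConcatSum r r₁ r₂ → ConsistentAt R r₁ r₂ r

/-- Top-aligned consistency (TCON). -/
def TCON [DecidableEq X] (R : SRSMap X) : Prop :=
  ∀ r₁ r₂ r : CoalRanking X, IsTopAlignedSum r r₁ r₂ → ConsistentAt R r₁ r₂ r

/-- Bottom-aligned consistency (BCON). -/
def BCON [DecidableEq X] (R : SRSMap X) : Prop :=
  ∀ r₁ r₂ r : CoalRanking X, IsBottomAlignedSum r r₁ r₂ → ConsistentAt R r₁ r₂ r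

/-- II-concatenation consistency. -/
def IICCON [DecidableEq X] (R : SRSMap X) : Prop :=
  ∀ r₁ r₂ r : CoalRanking X, IsConcatSum r r₁ r₂ →
    ∀ x y : X, Ind R r₁ x y → Ind R r₂ x y → Ind R r x y

/-- IP-concatenation consistency. -/
def IPCCON [DecidableEq X] (R : SRSMap X) : Prop :=
  ∀ r₁ r₂ r : CoalRanking X, IsConcatSum r r₁ r₂ →
    ∀ x y : X, Ind R r₁ x y → Pref R r₂ x y → Pref R r x y

/-- PI-concatenation consistency. -/
def PICCON [DecidableEq X] (R : SRSMap X) : Prop :=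
  ∀ r₁ r₂ r : CoalRanking X, IsConcatSum r r₁ r₂ →
    ∀ x y : X, Pref R r₁ x y → Ind R r₂ x y → Pref R r x y

/-- PP-concatenation consistency. -/
def PPCCON [DecidableEq X] (R : SRSMap X) : Prop :=
  ∀ r₁ r₂ r : CoalRanking X, IsConcatSum r r₁ r₂ →
    ∀ x y : X, Pref R r₁ x y → Pref R r₂ x y → Pref R r x y

/-- `x_k`: the number of coalitions of the class `C` containing `x`. -/
def cnt [DecidableEq X] (x : X) (C : Finset (Finset X)) : ℕ :=
  (C.filter (fun S => x ∈ S)).card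

/-- The vector `θ_≿(x) = (x₁, …, x_l)`. -/
def theta [DecidableEq X] (r : CoalRanking X) (x : X) : List ℕ :=
  r.classes.map (cnt x)

/-- `sign`: `1` on positive numbers, `0` otherwise. -/
def sgn (n : ℕ) : ℕ := if 0 < n then 1 else 0

/-- The vector `θ̇_≿(x) = (sign(x₁), …, sign(x_l))`. -/
def thetaDot [DecidableEq X] (r : CoalRanking X) (x : X) : List ℕ :=
  (theta r x).map sgn

/-- The lexicographic order `≥^L` on vectors (of equal length). -/
def lexGE : List ℕ → List ℕ → Prop
  | _, [] => True
  | [], _ :: _ => False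
  | a :: as, b :: bs => b < a ∨ (a = b ∧ lexGE as bs)

/-- The lexicographic excellence solution (lex-cel) `R^L`. -/
def lexcel [DecidableEq X] : SRSMap X := fun r x y => lexGE (theta r x) (theta r y)

/-- The sign lexicographic excellence solution (S lex-cel) `R^{SL}`. -/
def slexcel [DecidableEq X] : SRSMap X := fun r x y => lexGE (thetaDot r x) (thetaDot r y)

/-- The plurality solution `R^P`. -/
def plurality [DecidableEq X] : SRSMap X := fun r x y =>
  (theta r y).headD 0 ≤ (theta r x).headD 0

/-- The sign plurality solution `R^{SP}`. -/
def splurality [DecidableEq X] : SRSMap X := fun r x y =>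
  sgn ((theta r y).headD 0) ≤ sgn ((theta r x).headD 0)

/-- The anti-plurality solution `R^{AP}`. -/
def antiplurality [DecidableEq X] : SRSMap X := fun r x y =>
  (theta r x).getLastD 0 ≤ (theta r y).getLastD 0

/-- `e_≿(x)`: the largest `k` such that `x` belongs to every coalition of each of the
first `k` equivalence classes. -/
def eIIS [DecidableEq X] (r : CoalRanking X) (x : X) : ℕ :=
  (r.classes.takeWhile (fun C => decide (∀ S ∈ C, x ∈ S))).length

/-- The intersection initial segment solution (IIS) `R^{IIS}`. -/
def iis [DecidableEq X] : SRSMap X := fun r x y => eIIS r y ≤ eIIS r x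

/-- The index of the equivalence class a coalition belongs to. -/
def classIdx [DecidableEq X] (r : CoalRanking X) (S : Finset X) : ℕ :=
  r.classes.findIdx (fun C => decide (S ∈ C))

/-- `C_{xy}`: the number of CP comparisons in favour of `x` against `y`. -/
def cpCount [DecidableEq X] [Fintype X] (r : CoalRanking X) (x y : X) : ℕ :=
  ((Finset.univ : Finset (Finset X)).filter (fun S =>
    S.Nonempty ∧ x ∉ S ∧ y ∉ S ∧ insert x S ∈ r.domain ∧ insert y S ∈ r.domain ∧
    classIdx r (insert x S) < classIdx r (insert y S))).card

/-- The Ceteris Paribus majority solution `R^{CPM}`. -/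
def cpm [DecidableEq X] [Fintype X] : SRSMap X := fun r x y =>
  cpCount r y x ≤ cpCount r x y

/-- Neutrality (NT). -/
def NT [DecidableEq X] (R : SRSMap X) : Prop :=
  ∀ (σ : Equiv.Perm X) (r : CoalRanking X) (x y : X),
    R (r.mapPerm σ) (σ x) (σ y) ↔ R r x y

/-- Weak coalitional anonymity (WCA). -/
def WCA [DecidableEq X] (R : SRSMap X) : Prop :=
  ∀ (x y : X) (π : Equiv.Perm (Finset X))
    (hπ : ∀ S : Finset X, S.Nonempty → (π S).Nonempty),
    (∀ S : Finset X, x ∈ S → x ∈ π S) → (∀ S : Finset X, y ∈ S → y ∈ π S) →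
    ∀ r : CoalRanking X,
      (R (r.mapCoalPerm π hπ) x y ↔ R r x y) ∧ (R (r.mapCoalPerm π hπ) y x ↔ R r y x)

/-- The weak union very important person property (WUVIP). -/
def WUVIP (R : SRSMap X) : Prop :=
  ∀ (r : CoalRanking X) (A B : Finset (Finset X)), r.classes = [A, B] →
    ∀ x y : X, (∃ S ∈ A, x ∈ S) → (∀ S ∈ A, y ∉ S) → Pref R r x y

/-- All indifference all winners (AIAW). -/
def AIAW [DecidableEq X] (R : SRSMap X) : Prop :=
  ∀ r : CoalRanking X, r.classes.length ≤ 1 →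
    (∀ x y : X, (∃ S ∈ r.domain, x ∈ S) → (∃ S ∈ r.domain, y ∈ S) → Ind R r x y) ∧
    (∀ x z : X, (∃ S ∈ r.domain, x ∈ S) → (∀ S ∈ r.domain, z ∉ S) → Pref R r x z)

/-- Independence of the decomposition of the worst sets (IDWS). -/
def IDWS [DecidableEq X] (R : SRSMap X) : Prop :=
  ∀ (r r' : CoalRanking X) (L G : List (Finset (Finset X))) (W : Finset (Finset X)),
    L ≠ [] → r.classes = L ++ [W] → r'.classes = L ++ G →
    G.foldr (· ∪ ·) ∅ = W →
    ∀ x y : X, Pref R r x y → Pref R r' x y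

/-- Independence of the addition of the worst sets (IAWS). -/
def IAWS [DecidableEq X] (R : SRSMap X) : Prop :=
  ∀ (r r' : CoalRanking X) (G : Finset (Finset X)),
    r'.classes = r.classes ++ [G] → (∀ S ∈ G, S ∉ r.domain) →
    ∀ x y : X, Pref R r x y → Pref R r' x y

/-- Tops-only (TO). -/
def TO (R : SRSMap X) : Prop :=
  ∀ (r r' : CoalRanking X) (A : Finset (Finset X)),
    r.classes.head? = some A → r'.classes.head? = some A → R r = R r'

/-- The dual S lex-cel `R^{DSL}`. -/
def dslexcel [DecidableEq X] : SRSMap X := fun r x y =>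
  lexGE ((thetaDot r y).reverse) ((thetaDot r x).reverse)

/-- The inverse dual S lex-cel `R^{IDSL}`. -/
def idslexcel [DecidableEq X] : SRSMap X := fun r x y => dslexcel r y x

/-- The vector `θ̃_≿(x)` used by the S lex-cel with precedence on unanimity. -/
def tildeTheta [DecidableEq X] (r : CoalRanking X) (x : X) : List ℕ :=
  r.classes.map (fun C => if cnt x C = C.card then 2 else if 0 < cnt x C then 1 else 0)

/-- The S lex-cel with a particular precedence on unanimity `R^{SLUN}`. -/
def slun [DecidableEq X] : SRSMap X := fun r x y =>
  lexGE (tildeTheta r x) (tildeTheta r y)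

/-- The S sum score `Σ_k sign(x_k)`. -/
def ssum [DecidableEq X] (r : CoalRanking X) (x : X) : ℕ := (thetaDot r x).sum

/-- The S sum rule with tie-breaking by S lex-cel `R^{SSUM,SL}`. -/
def ssumSL [DecidableEq X] : SRSMap X := fun r x y =>
  ssum r y < ssum r x ∨ (ssum r x = ssum r y ∧ slexcel r x y)

end SocRank

open SocRank
section Aux
open SocRank SocRank.CoalRanking

variable {X : Type*} [DecidableEq X]

theorem CoalRanking.ext' {r s : CoalRanking X} (h : r.classes = s.classes) : r = s := by
  cases r; cases s; cases h; rfl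

theorem mem_foldr_union {l : List (Finset (Finset X))} {S : Finset X} :
    S ∈ l.foldr (· ∪ ·) ∅ ↔ ∃ C ∈ l, S ∈ C := by
  induction l with
  | nil => simp
  | cons C l ih => simp [ih]

theorem mem_domain {r : CoalRanking X} {S : Finset X} :
    S ∈ r.domain ↔ ∃ C ∈ r.classes, S ∈ C := mem_foldr_union

theorem lexGE_refl : ∀ a : List ℕ, lexGE a a
  | [] => trivial
  | _ :: as => Or.inr ⟨rfl, lexGE_refl as⟩

theorem lexGE_total : ∀ a b : List ℕ, a.length = b.length → lexGE a b ∨ lexGE b a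
  | [], [], _ => Or.inl trivial
  | [], _ :: _, h => by simp at h
  | _ :: _, [], h => by simp at h
  | a :: as, b :: bs, h => by
      rcases lt_trichotomy a b with hab | rfl | hab
      · exact Or.inr (Or.inl hab)
      · rcases lexGE_total as bs (by simpa using h) with h' | h'
        · exact Or.inl (Or.inr ⟨rfl, h'⟩)
        · exact Or.inr (Or.inr ⟨rfl, h'⟩)
      · exact Or.inl (Or.inl hab)

theorem cnt_pos_iff {x : X} {C : Finset (Finset X)} : 0 < cnt x C ↔ ∃ S ∈ C, x ∈ S := by
  simp [cnt, Finset.card_pos, Finset.filter_nonempty_iff]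

theorem cnt_eq_zero_iff {x : X} {C : Finset (Finset X)} : cnt x C = 0 ↔ ∀ S ∈ C, x ∉ S := by
  simp [cnt, Finset.card_eq_zero, Finset.filter_eq_empty_iff]

theorem sgn_eq_one_iff {n : ℕ} : sgn n = 1 ↔ 0 < n := by
  unfold sgn; split <;> simp_all

theorem sgn_eq_zero_iff {n : ℕ} : sgn n = 0 ↔ n = 0 := by
  unfold sgn; split <;> omega

theorem sgn_le_one (n : ℕ) : sgn n ≤ 1 := by
  unfold sgn; split <;> omega

theorem thetaDot_eq (r : CoalRanking X) (x : X) :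
    thetaDot r x = r.classes.map (fun C => sgn (cnt x C)) := by
  simp [thetaDot, theta, List.map_map, Function.comp]

def subRank (r : CoalRanking X) (l : List (Finset (Finset X))) (hsub : l.Sublist r.classes) :
    CoalRanking X where
  classes := l
  class_nonempty := fun C hC => r.class_nonempty C (hsub.subset hC)
  coal_nonempty := fun C hC => r.coal_nonempty C (hsub.subset hC)
  classes_disjoint := r.classes_disjoint.sublist hsub

theorem disjoint_foldr_union {l1 l2 : List (Finset (Finset X))}
    (h : (l1 ++ l2).Pairwise Disjoint) :
    Disjoint (l1.foldr (· ∪ ·) ∅) (l2.foldr (· ∪ ·) ∅) := by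
  rw [Finset.disjoint_left]
  intro S h1 h2
  rw [mem_foldr_union] at h1 h2
  obtain ⟨C1, hC1, hS1⟩ := h1
  obtain ⟨C2, hC2, hS2⟩ := h2
  exact Finset.disjoint_left.mp ((List.pairwise_append.mp h).2.2 C1 hC1 C2 hC2) hS1 hS2

theorem swap_fix {x y : X} {S : Finset X} (hxy : x ∈ S ↔ y ∈ S) :
    S.image (Equiv.swap x y) = S := by
  have key : ∀ a ∈ S, Equiv.swap x y a ∈ S := by
    intro a ha
    rcases eq_or_ne a x with rfl | hax
    · rw [Equiv.swap_apply_left]; exact hxy.mp ha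
    rcases eq_or_ne a y with rfl | hay
    · rw [Equiv.swap_apply_right]; exact hxy.mpr ha
    · rwa [Equiv.swap_apply_of_ne_of_ne hax hay]
  apply Finset.Subset.antisymm
  · intro a ha
    rw [Finset.mem_image] at ha
    obtain ⟨b, hb, rfl⟩ := ha
    exact key b hb
  · intro a ha
    rw [Finset.mem_image]
    exact ⟨Equiv.swap x y a, key a ha, Equiv.swap_apply_self x y a⟩

variable {R : SRSMap X}

theorem ind_of_symm (hNT : NT R) (hcomp : ∀ r (x y : X), R r x y ∨ R r y x)
    {r : CoalRanking X} {x y : X}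
    (h : ∀ C ∈ r.classes, ∀ S ∈ C, (x ∈ S ↔ y ∈ S)) : Ind R r x y := by
  have hmap : r.mapPerm (Equiv.swap x y) = r := by
    apply CoalRanking.ext'
    show r.classes.map _ = r.classes
    conv_rhs => rw [← List.map_id r.classes]
    refine List.map_congr_left fun C hC => ?_
    show C.image (fun S => S.image (Equiv.swap x y)) = C
    calc C.image (fun S => S.image (Equiv.swap x y)) = C.image id :=
          Finset.image_congr (fun S hS => swap_fix (h C hC S hS))
      _ = C := Finset.image_id
  have h1 := hNT (Equiv.swap x y) r x y
  rw [hmap, Equiv.swap_apply_left, Equiv.swap_apply_right] at h1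
  rcases hcomp r x y with h2 | h2
  · exact ⟨h2, h1.mpr h2⟩
  · exact ⟨h1.mp h2, h2⟩

end Aux
section Aux2
set_option linter.unusedSectionVars false
open SocRank SocRank.CoalRanking

variable {X : Type*} [DecidableEq X] {R : SRSMap X}

theorem ind_single (hNT : NT R) (hcomp : ∀ r (x y : X), R r x y ∨ R r y x) (hAIAW : AIAW R)
    {r : CoalRanking X} {C : Finset (Finset X)} (h : r.classes = [C]) {x y : X}
    (hsgn : sgn (cnt x C) = sgn (cnt y C)) : Ind R r x y := by
  by_cases hx : 0 < cnt x C
  · have hy : 0 < cnt y C := by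
      rw [← sgn_eq_one_iff, ← hsgn, sgn_eq_one_iff]; exact hx
    obtain ⟨Sx, hSx, hxS⟩ := cnt_pos_iff.mp hx
    obtain ⟨Sy, hSy, hyS⟩ := cnt_pos_iff.mp hy
    refine (hAIAW r (by rw [h]; simp)).1 x y
      ⟨Sx, mem_domain.mpr ⟨C, by simp [h], hSx⟩, hxS⟩
      ⟨Sy, mem_domain.mpr ⟨C, by simp [h], hSy⟩, hyS⟩
  · have hx0 : cnt x C = 0 := Nat.eq_zero_of_not_pos hx
    have hy0 : cnt y C = 0 := by
      have h1 : sgn (cnt y C) = 0 := by rw [← hsgn, sgn_eq_zero_iff]; exact hx0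
      exact sgn_eq_zero_iff.mp h1
    apply ind_of_symm hNT hcomp
    intro C' hC' S hS
    rw [h, List.mem_singleton] at hC'; subst hC'
    simp [cnt_eq_zero_iff.mp hx0 S hS, cnt_eq_zero_iff.mp hy0 S hS]

theorem concat_split {r : CoalRanking X} {C : Finset (Finset X)} {cs : List (Finset (Finset X))}
    (h : r.classes = C :: cs) :
    IsConcatSum r (subRank r [C] (by rw [h]; exact (List.nil_sublist cs).cons₂ C))
      (subRank r cs (by rw [h]; exact List.sublist_cons_self C cs)) := by
  constructor
  · have : Disjoint ([C].foldr (· ∪ ·) ∅) (cs.foldr (· ∪ ·) (∅ : Finset (Finset X))) := by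
      apply disjoint_foldr_union
      rw [List.singleton_append, ← h]; exact r.classes_disjoint
    exact this
  · exact h

theorem ind_of_thetaDot_eq (hNT : NT R) (hcomp : ∀ r (x y : X), R r x y ∨ R r y x)
    (hAIAW : AIAW R) (hCCON : CCON R) :
    ∀ (cs : List (Finset (Finset X))) (r : CoalRanking X), r.classes = cs →
      ∀ x y : X, thetaDot r x = thetaDot r y → Ind R r x y := by
  intro cs
  induction cs with
  | nil =>
    intro r h x y _
    exact ind_of_symm hNT hcomp (by rw [h]; intro C hC; simp at hC)
  | cons C cs ih =>
    intro r h x y hth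
    rw [thetaDot_eq, thetaDot_eq, h, List.map_cons, List.map_cons] at hth
    injection hth with hhead htail
    have hsum := concat_split h
    have i1 : Ind R (subRank r [C] (by rw [h]; exact (List.nil_sublist cs).cons₂ C)) x y :=
      ind_single hNT hcomp hAIAW rfl hhead
    have i2 : Ind R (subRank r cs (by rw [h]; exact List.sublist_cons_self C cs)) x y := by
      apply ih _ rfl
      rw [thetaDot_eq, thetaDot_eq]
      exact htail
    exact (hCCON _ _ r hsum x y).1 i1 i2

end Aux2
section Aux3
set_option linter.unusedSectionVars false
open SocRank SocRank.CoalRanking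

variable {X : Type*} [DecidableEq X] {R : SRSMap X}

theorem pref_head (hNT : NT R) (hcomp : ∀ r (x y : X), R r x y ∨ R r y x)
    (hAIAW : AIAW R) (hCCON : CCON R) (hIDWS : IDWS R)
    {r : CoalRanking X} {A : Finset (Finset X)} {cs : List (Finset (Finset X))}
    (h : r.classes = A :: cs) {x y : X}
    (hxA : ∃ S ∈ A, x ∈ S) (hyA : ∀ S ∈ A, y ∉ S) : Pref R r x y := by
  obtain ⟨Sx, hSxA, hxSx⟩ := hxA
  -- basic facts about A
  have hAne : A.Nonempty := ⟨Sx, hSxA⟩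
  have hAmem : A ∈ r.classes := by rw [h]; exact List.mem_cons_self
  have hPairs := List.pairwise_cons.mp (h ▸ r.classes_disjoint)
  -- the single-class ranking on A
  have hsubA : [A].Sublist r.classes := by rw [h]; exact (List.nil_sublist cs).cons₂ A
  set rA : CoalRanking X := subRank r [A] hsubA with hrA
  have memdomA : ∀ S : Finset X, S ∈ rA.domain ↔ S ∈ A := by
    intro S; rw [mem_domain]; simp [hrA, subRank]
  have prefA : Pref R rA x y := by
    refine (hAIAW rA (by simp [hrA, subRank])).2 x y
      ⟨Sx, (memdomA Sx).mpr hSxA, hxSx⟩ (fun S hS => hyA S ((memdomA S).mp hS))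
  rcases cs with _ | ⟨C1, cs'⟩
  · -- single class: r = rA essentially
    have : r = rA := CoalRanking.ext' (by rw [h]; rfl)
    rw [this]; exact prefA
  set cs : List (Finset (Finset X)) := C1 :: cs' with hcs
  -- the union of the tail classes
  set W : Finset (Finset X) := cs.foldr (· ∪ ·) ∅ with hW
  have memW : ∀ S : Finset X, S ∈ W ↔ ∃ C ∈ cs, S ∈ C := fun S => mem_foldr_union
  have hAdisjW : Disjoint A W := by
    rw [Finset.disjoint_right]
    intro S hSW hSA
    obtain ⟨C, hC, hSC⟩ := (memW S).mp hSW
    exact Finset.disjoint_left.mp (hPairs.1 C hC) hSA hSC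
  have hWcoal : ∀ S ∈ W, S.Nonempty := by
    intro S hS
    obtain ⟨C, hC, hSC⟩ := (memW S).mp hS
    exact r.coal_nonempty C (by rw [h]; exact List.mem_cons_of_mem A hC) S hSC
  have hWne : W.Nonempty := by
    obtain ⟨S, hS⟩ := r.class_nonempty C1 (by rw [h, hcs]; simp)
    exact ⟨S, (memW S).mpr ⟨C1, by simp [hcs], hS⟩⟩
  by_cases hyW : ∃ S ∈ W, y ∈ S
  case neg =>
    -- y misses W : merge the tail and use IDWS, no fresh coalition needed
    set m : CoalRanking X := ⟨[A, W],
      by intro C hC; simp only [List.mem_cons, List.not_mem_nil, or_false] at hC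
         rcases hC with rfl | rfl; exacts [hAne, hWne],
      by intro C hC S hS; simp only [List.mem_cons, List.not_mem_nil, or_false] at hC
         rcases hC with rfl | rfl
         · exact r.coal_nonempty _ hAmem S hS
         · exact hWcoal S hS,
      by simp [List.pairwise_cons, hAdisjW]⟩ with hm
    have hsubW : [W].Sublist m.classes := by
      show [W].Sublist [A, W]
      exact (List.nil_sublist []).cons₂ W |>.cons A
    set mW : CoalRanking X := subRank m [W] hsubW with hmW
    have memdomW : ∀ S : Finset X, S ∈ mW.domain ↔ S ∈ W := by
      intro S; rw [mem_domain]; simp [hmW, subRank]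
    have hsum : IsConcatSum m (subRank m [A] ((List.nil_sublist [W]).cons₂ A)) mW := by
      constructor
      · have : Disjoint ([A].foldr (· ∪ ·) ∅) ([W].foldr (· ∪ ·) (∅ : Finset (Finset X))) := by
          apply disjoint_foldr_union
          show ([A] ++ [W]).Pairwise Disjoint
          exact m.classes_disjoint
        exact this
      · rfl
    have prefA' : Pref R (subRank m [A] ((List.nil_sublist [W]).cons₂ A)) x y := by
      have : subRank m [A] ((List.nil_sublist [W]).cons₂ A) = rA := CoalRanking.ext' rfl
      rw [this]; exact prefA
    have relW : Ind R mW x y ∨ Pref R mW x y := by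
      by_cases hxW : ∃ S ∈ W, x ∈ S
      · -- x hits W, y misses W : Pref
        obtain ⟨Sw, hSw, hxSw⟩ := hxW
        refine Or.inr ((hAIAW mW (by simp [hmW, subRank])).2 x y
          ⟨Sw, (memdomW Sw).mpr hSw, hxSw⟩ (fun S hS hyS => hyW ⟨S, (memdomW S).mp hS, hyS⟩))
      · -- both miss W : Ind by neutrality
        refine Or.inl (ind_of_symm hNT hcomp ?_)
        intro C hC S hS
        have hCW : C = W := by simpa [hmW, subRank] using hC
        subst hCW
        constructor
        · intro hxS; exact absurd ⟨S, hS, hxS⟩ hxW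
        · intro hyS; exact absurd ⟨S, hS, hyS⟩ hyW
    have prefm : Pref R m x y := by
      rcases relW with hI | hP
      · exact (hCCON _ _ m hsum x y).2.2.1 prefA' hI
      · exact (hCCON _ _ m hsum x y).2.2.2 prefA' hP
    exact hIDWS m r [A] cs W (by simp) rfl (by rw [h]; rfl) rfl x y prefm
  case pos =>
    by_cases hxW : ∃ S ∈ W, x ∈ S
    case pos =>
      -- both hit W : merge tail, Ind in [W] by AIAW, then IDWS
      set m : CoalRanking X := ⟨[A, W],
        by intro C hC; simp only [List.mem_cons, List.not_mem_nil, or_false] at hC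
           rcases hC with rfl | rfl; exacts [hAne, hWne],
        by intro C hC S hS; simp only [List.mem_cons, List.not_mem_nil, or_false] at hC
           rcases hC with rfl | rfl
           · exact r.coal_nonempty _ hAmem S hS
           · exact hWcoal S hS,
        by simp [List.pairwise_cons, hAdisjW]⟩ with hm
      have hsubW : [W].Sublist m.classes := by
        show [W].Sublist [A, W]
        exact (List.nil_sublist []).cons₂ W |>.cons A
      set mW : CoalRanking X := subRank m [W] hsubW with hmW
      have memdomW : ∀ S : Finset X, S ∈ mW.domain ↔ S ∈ W := by
        intro S; rw [mem_domain]; simp [hmW, subRank]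
      have hsum : IsConcatSum m (subRank m [A] ((List.nil_sublist [W]).cons₂ A)) mW := by
        constructor
        · have : Disjoint ([A].foldr (· ∪ ·) ∅) ([W].foldr (· ∪ ·) (∅ : Finset (Finset X))) := by
            apply disjoint_foldr_union
            show ([A] ++ [W]).Pairwise Disjoint
            exact m.classes_disjoint
          exact this
        · rfl
      have prefA' : Pref R (subRank m [A] ((List.nil_sublist [W]).cons₂ A)) x y := by
        have : subRank m [A] ((List.nil_sublist [W]).cons₂ A) = rA := CoalRanking.ext' rfl
        rw [this]; exact prefA
      obtain ⟨Sw, hSw, hxSw⟩ := hxW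
      obtain ⟨Sw', hSw', hySw'⟩ := hyW
      have indW : Ind R mW x y :=
        (hAIAW mW (by simp [hmW, subRank])).1 x y
          ⟨Sw, (memdomW Sw).mpr hSw, hxSw⟩ ⟨Sw', (memdomW Sw').mpr hSw', hySw'⟩
      have prefm : Pref R m x y := (hCCON _ _ m hsum x y).2.2.1 prefA' indW
      exact hIDWS m r [A] cs W (by simp) rfl (by rw [h]; rfl) rfl x y prefm
    case neg =>
      -- x misses W, y hits W : the fresh coalition {x,y}
      have hxmiss : ∀ S ∈ W, x ∉ S := fun S hS hxS => hxW ⟨S, hS, hxS⟩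
      set C0 : Finset (Finset X) := {({x, y} : Finset X)} with hC0
      have hxyne : ({x, y} : Finset X).Nonempty := ⟨x, by simp⟩
      have hfreshA : ({x, y} : Finset X) ∉ A := fun hmem => hyA _ hmem (by simp)
      have hfreshcs : ∀ C ∈ cs, ({x, y} : Finset X) ∉ C := fun C hC hmem =>
        hxmiss _ ((memW _).mpr ⟨C, hC, hmem⟩) (by simp)
      set W' : Finset (Finset X) := (cs ++ [C0]).foldr (· ∪ ·) ∅ with hW'
      have memW' : ∀ S : Finset X, S ∈ W' ↔ S ∈ W ∨ S = ({x, y} : Finset X) := by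
        intro S
        rw [hW', mem_foldr_union]
        constructor
        · rintro ⟨C, hC, hSC⟩
          rcases List.mem_append.mp hC with hC | hC
          · exact Or.inl ((memW S).mpr ⟨C, hC, hSC⟩)
          · rw [List.mem_singleton] at hC; subst hC
            exact Or.inr (Finset.mem_singleton.mp hSC)
        · rintro (hS | rfl)
          · obtain ⟨C, hC, hSC⟩ := (memW S).mp hS
            exact ⟨C, List.mem_append.mpr (Or.inl hC), hSC⟩
          · exact ⟨C0, List.mem_append.mpr (Or.inr (by simp)), Finset.mem_singleton_self _⟩
      have hxyW' : ({x, y} : Finset X) ∈ W' := (memW' _).mpr (Or.inr rfl)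
      have hAdisjW' : Disjoint A W' := by
        rw [Finset.disjoint_right]
        intro S hSW' hSA
        rcases (memW' S).mp hSW' with hS | rfl
        · exact Finset.disjoint_right.mp hAdisjW hS hSA
        · exact hfreshA hSA
      set m' : CoalRanking X := ⟨[A, W'],
        by intro C hC; simp only [List.mem_cons, List.not_mem_nil, or_false] at hC
           rcases hC with rfl | rfl; exacts [hAne, ⟨_, hxyW'⟩],
        by intro C hC S hS; simp only [List.mem_cons, List.not_mem_nil, or_false] at hC
           rcases hC with rfl | rfl
           · exact r.coal_nonempty _ hAmem S hS
           · rcases (memW' S).mp hS with hS' | rfl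
             exacts [hWcoal S hS', hxyne],
        by simp [List.pairwise_cons, hAdisjW']⟩ with hm'
      -- the extended ranking p with the fresh class at the bottom
      set p : CoalRanking X := ⟨A :: (cs ++ [C0]),
        by intro C hC
           rcases List.mem_cons.mp hC with rfl | hC
           · exact hAne
           rcases List.mem_append.mp hC with hC | hC
           · exact r.class_nonempty C (by rw [h]; exact List.mem_cons_of_mem A hC)
           · rw [List.mem_singleton] at hC; subst hC
             exact ⟨_, Finset.mem_singleton_self _⟩,
        by intro C hC S hS
           rcases List.mem_cons.mp hC with rfl | hC
           · exact r.coal_nonempty _ hAmem S hS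
           rcases List.mem_append.mp hC with hC | hC
           · exact r.coal_nonempty C (by rw [h]; exact List.mem_cons_of_mem A hC) S hS
           · rw [List.mem_singleton] at hC; subst hC
             rw [Finset.mem_singleton] at hS; subst hS
             exact hxyne,
        by
          have h0 : ∀ B ∈ A :: cs, Disjoint B C0 := by
            intro B hB
            rw [hC0, Finset.disjoint_singleton_right]
            rcases List.mem_cons.mp hB with rfl | hB
            · exact hfreshA
            · exact hfreshcs B hB
          have heq : A :: (cs ++ [C0]) = (A :: cs) ++ [C0] := rfl
          rw [heq, List.pairwise_append]
          refine ⟨h ▸ r.classes_disjoint, List.pairwise_singleton _ _, ?_⟩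
          intro a ha b hb
          rw [List.mem_singleton] at hb; subst hb
          exact h0 a ha⟩ with hp
      -- m' : Pref via CCON
      have hsubW' : [W'].Sublist m'.classes := by
        show [W'].Sublist [A, W']
        exact (List.nil_sublist []).cons₂ W' |>.cons A
      set mW' : CoalRanking X := subRank m' [W'] hsubW' with hmW'
      have hsum' : IsConcatSum m' (subRank m' [A] ((List.nil_sublist [W']).cons₂ A)) mW' := by
        constructor
        · have : Disjoint ([A].foldr (· ∪ ·) ∅) ([W'].foldr (· ∪ ·) (∅ : Finset (Finset X))) := by
            apply disjoint_foldr_union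
            show ([A] ++ [W']).Pairwise Disjoint
            exact m'.classes_disjoint
          exact this
        · rfl
      have prefA' : Pref R (subRank m' [A] ((List.nil_sublist [W']).cons₂ A)) x y := by
        have : subRank m' [A] ((List.nil_sublist [W']).cons₂ A) = rA := CoalRanking.ext' rfl
        rw [this]; exact prefA
      have memdomW' : ∀ S : Finset X, S ∈ mW'.domain ↔ S ∈ W' := by
        intro S; rw [mem_domain]; simp [hmW', subRank]
      have indW' : Ind R mW' x y :=
        (hAIAW mW' (by simp [hmW', subRank])).1 x y
          ⟨{x, y}, (memdomW' _).mpr hxyW', by simp⟩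
          ⟨{x, y}, (memdomW' _).mpr hxyW', by simp⟩
      have prefm' : Pref R m' x y := (hCCON _ _ m' hsum' x y).2.2.1 prefA' indW'
      -- IDWS : from m' to p
      have prefp : Pref R p x y :=
        hIDWS m' p [A] (cs ++ [C0]) W' (by simp) rfl rfl rfl x y prefm'
      -- the single-class ranking on C0
      set rC0 : CoalRanking X := ⟨[C0],
        by intro C hC; rw [List.mem_singleton] at hC; subst hC
           exact ⟨_, Finset.mem_singleton_self _⟩,
        by intro C hC S hS; rw [List.mem_singleton] at hC; subst hC
           rw [hC0, Finset.mem_singleton] at hS; subst hS; exact hxyne,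
        List.pairwise_singleton _ _⟩ with hrC0
      have memdomC0 : ∀ S : Finset X, S ∈ rC0.domain ↔ S = ({x, y} : Finset X) := by
        intro S; rw [mem_domain]; simp [hrC0, hC0]
      have indC0 : Ind R rC0 x y :=
        (hAIAW rC0 (by simp [hrC0])).1 x y
          ⟨{x, y}, (memdomC0 _).mpr rfl, by simp⟩ ⟨{x, y}, (memdomC0 _).mpr rfl, by simp⟩
      -- p = r · rC0
      have hsump : IsConcatSum p r rC0 := by
        constructor
        · rw [Finset.disjoint_right]
          intro S hS1 hS2
          have hSxy : S = ({x, y} : Finset X) := (memdomC0 S).mp hS1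
          subst hSxy
          obtain ⟨C, hC, hSC⟩ := mem_domain.mp hS2
          rw [h] at hC
          rcases List.mem_cons.mp hC with rfl | hC
          · exact hfreshA hSC
          · exact hfreshcs C hC hSC
        · show p.classes = r.classes ++ [C0]
          rw [h]; rfl
      -- pushback : trichotomy
      have hcon := hCCON r rC0 p hsump
      have hnyx : ¬ R r y x := by
        intro hyx
        by_cases hxy2 : R r x y
        · have hI : Ind R p x y := (hcon x y).1 ⟨hxy2, hyx⟩ indC0
          exact prefp.2 hI.2
        · have hP : Pref R p y x := (hcon y x).2.2.1 ⟨hyx, hxy2⟩ ⟨indC0.2, indC0.1⟩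
          exact prefp.2 hP.1
      exact ⟨(hcomp r x y).resolve_right hnyx, hnyx⟩

end Aux3
section Aux4
set_option linter.unusedSectionVars false
open SocRank SocRank.CoalRanking

variable {X : Type*} [DecidableEq X] {R : SRSMap X}

theorem pref_of_lexGT (hNT : NT R) (hcomp : ∀ r (x y : X), R r x y ∨ R r y x)
    (hAIAW : AIAW R) (hCCON : CCON R) (hIDWS : IDWS R) :
    ∀ (cs : List (Finset (Finset X))) (r : CoalRanking X), r.classes = cs →
      ∀ x y : X, lexGE (thetaDot r x) (thetaDot r y) → thetaDot r x ≠ thetaDot r y →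
      Pref R r x y := by
  intro cs
  induction cs with
  | nil =>
    intro r h x y _ hne
    exact absurd (by rw [thetaDot_eq, thetaDot_eq, h]; rfl) hne
  | cons C cs ih =>
    intro r h x y hge hne
    rw [thetaDot_eq, thetaDot_eq, h, List.map_cons, List.map_cons] at hge hne
    rcases hge with hlt | ⟨heq, hge'⟩
    · -- head strict
      have hx1 : 0 < cnt x C := by
        by_contra h0
        have h1 : sgn (cnt x C) = 0 := sgn_eq_zero_iff.mpr (Nat.eq_zero_of_not_pos h0)
        omega
      have hy0 : cnt y C = 0 := by
        by_contra h0
        have h1 : sgn (cnt y C) = 1 := sgn_eq_one_iff.mpr (Nat.pos_of_ne_zero h0)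
        have h2 : sgn (cnt x C) ≤ 1 := sgn_le_one _
        omega
      exact pref_head hNT hcomp hAIAW hCCON hIDWS h (cnt_pos_iff.mp hx1) (cnt_eq_zero_iff.mp hy0)
    · -- head equal
      have hsum := concat_split h
      have i1 : Ind R (subRank r [C] (by rw [h]; exact (List.nil_sublist cs).cons₂ C)) x y :=
        ind_single hNT hcomp hAIAW rfl heq
      have p2 : Pref R (subRank r cs (by rw [h]; exact List.sublist_cons_self C cs)) x y := by
        apply ih _ rfl x y
        · rw [thetaDot_eq, thetaDot_eq]; exact hge'
        · intro ht
          rw [thetaDot_eq, thetaDot_eq] at ht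
          have ht' : List.map (fun C => sgn (cnt x C)) cs = List.map (fun C => sgn (cnt y C)) cs := ht
          exact hne (by rw [heq, ht'])
      exact (hCCON _ _ r hsum x y).2.1 i1 p2

theorem lexGT_cons_of_lt {a b : ℕ} {as bs : List ℕ} (h : b < a) :
    lexGE (a :: as) (b :: bs) ∧ ¬ lexGE (b :: bs) (a :: as) := by
  refine ⟨Or.inl h, fun hc => ?_⟩
  rcases hc with hc | ⟨hc, _⟩ <;> omega

theorem lexGT_cons_of_eq {a : ℕ} {as bs : List ℕ}
    (h : lexGE as bs ∧ ¬ lexGE bs as) :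
    lexGE (a :: as) (a :: bs) ∧ ¬ lexGE (a :: bs) (a :: as) := by
  refine ⟨Or.inr ⟨rfl, h.1⟩, fun hc => ?_⟩
  rcases hc with hc | ⟨_, hc⟩
  · omega
  · exact h.2 hc

theorem lexGT_cons_elim {a b : ℕ} {as bs : List ℕ}
    (h : lexGE (a :: as) (b :: bs) ∧ ¬ lexGE (b :: bs) (a :: as)) :
    b < a ∨ (a = b ∧ (lexGE as bs ∧ ¬ lexGE bs as)) := by
  rcases h.1 with h1 | ⟨rfl, h1⟩
  · exact Or.inl h1
  · exact Or.inr ⟨rfl, h1, fun hc => h.2 (Or.inr ⟨rfl, hc⟩)⟩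

theorem lexGT_of_all_zero {α : Type*} :
    ∀ (G : List α) (fx fy : α → ℕ), (∀ C ∈ G, fy C = 0) → (∃ C ∈ G, 0 < fx C) →
      lexGE (G.map fx) (G.map fy) ∧ ¬ lexGE (G.map fy) (G.map fx) := by
  intro G
  induction G with
  | nil => rintro fx fy _ ⟨C, hC, _⟩; exact absurd hC List.not_mem_nil
  | cons C G ih =>
    intro fx fy hy0 hex
    by_cases hxC : 0 < fx C
    · rw [List.map_cons, List.map_cons]
      exact lexGT_cons_of_lt (by rw [hy0 C List.mem_cons_self]; exact hxC)
    · have hx0 : fx C = 0 := Nat.eq_zero_of_not_pos hxC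
      have hex' : ∃ C' ∈ G, 0 < fx C' := by
        obtain ⟨C', hC', hpos⟩ := hex
        rcases List.mem_cons.mp hC' with rfl | hC'
        · omega
        · exact ⟨C', hC', hpos⟩
      have htail := ih fx fy (fun C' hC' => hy0 C' (List.mem_cons_of_mem C hC')) hex'
      rw [List.map_cons, List.map_cons, hx0, hy0 C List.mem_cons_self]
      exact lexGT_cons_of_eq htail

theorem slexcel_idws_aux {X : Type*} [DecidableEq X] {x y : X} {W : Finset (Finset X)}
    {G : List (Finset (Finset X))} (hG : G.foldr (· ∪ ·) ∅ = W) :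
    ∀ L : List (Finset (Finset X)),
      (lexGE ((L ++ [W]).map fun C => sgn (cnt x C)) ((L ++ [W]).map fun C => sgn (cnt y C)) ∧
       ¬ lexGE ((L ++ [W]).map fun C => sgn (cnt y C)) ((L ++ [W]).map fun C => sgn (cnt x C))) →
      (lexGE ((L ++ G).map fun C => sgn (cnt x C)) ((L ++ G).map fun C => sgn (cnt y C)) ∧
       ¬ lexGE ((L ++ G).map fun C => sgn (cnt y C)) ((L ++ G).map fun C => sgn (cnt x C))) := by
  intro L
  induction L with
  | nil =>
    simp only [List.nil_append, List.map_cons, List.map_nil]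
    intro h
    have hlt : sgn (cnt y W) < sgn (cnt x W) := by
      rcases h.1 with h1 | ⟨heq, _⟩
      · exact h1
      · exact absurd (Or.inr ⟨heq.symm, trivial⟩) h.2
    have hx1 : 0 < cnt x W := by
      by_contra h0
      have h1 : sgn (cnt x W) = 0 := sgn_eq_zero_iff.mpr (Nat.eq_zero_of_not_pos h0)
      omega
    have hy0 : cnt y W = 0 := by
      by_contra h0
      have h1 : sgn (cnt y W) = 1 := sgn_eq_one_iff.mpr (Nat.pos_of_ne_zero h0)
      have h2 : sgn (cnt x W) ≤ 1 := sgn_le_one _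
      omega
    obtain ⟨Sx, hSx, hxSx⟩ := cnt_pos_iff.mp hx1
    have hymiss := cnt_eq_zero_iff.mp hy0
    apply lexGT_of_all_zero
    · intro C hC
      rw [sgn_eq_zero_iff, cnt_eq_zero_iff]
      intro S hS
      exact hymiss S (by rw [← hG]; exact mem_foldr_union.mpr ⟨C, hC, hS⟩)
    · obtain ⟨C, hC, hSC⟩ := mem_foldr_union.mp (hG ▸ hSx)
      exact ⟨C, hC, by rw [sgn_eq_one_iff.mpr (cnt_pos_iff.mpr ⟨Sx, hSC, hxSx⟩)]; omega⟩
  | cons C L ihL =>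
    simp only [List.cons_append, List.map_cons]
    intro h
    rcases lexGT_cons_elim h with hlt | ⟨heq, htail⟩
    · exact lexGT_cons_of_lt hlt
    · rw [heq]
      exact lexGT_cons_of_eq (ihL htail)

end Aux4

open SocRank

/-- for an SRS satisfying NT, CCON and AIAW, IDWS holds iff the SRS
is the S lex-cel. -/
theorem slexcel_characterization_idws {X : Type*} [DecidableEq X] [Fintype X]
    (hX : 3 ≤ Fintype.card X) (R : SRSMap X)
    (hrefl : ∀ (r : CoalRanking X) (x : X), R r x x)
    (hcomp : ∀ (r : CoalRanking X) (x y : X), R r x y ∨ R r y x)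
    (hNT : NT R) (hCCON : CCON R) (hAIAW : AIAW R) :
    IDWS R ↔ R = slexcel := by
  constructor
  · intro hIDWS
    funext r x y
    have hlen : (thetaDot r x).length = (thetaDot r y).length := by
      simp [thetaDot, theta]
    apply propext
    constructor
    · intro hR
      show lexGE (thetaDot r x) (thetaDot r y)
      by_contra hs
      have hge : lexGE (thetaDot r y) (thetaDot r x) :=
        (lexGE_total _ _ hlen).resolve_left hs
      have hne : thetaDot r y ≠ thetaDot r x := fun he => hs (he ▸ lexGE_refl _)
      have hP := pref_of_lexGT hNT hcomp hAIAW hCCON hIDWS r.classes r rfl y x hge hne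
      exact hP.2 hR
    · intro hs
      by_cases he : thetaDot r x = thetaDot r y
      · exact (ind_of_thetaDot_eq hNT hcomp hAIAW hCCON r.classes r rfl x y he).1
      · exact (pref_of_lexGT hNT hcomp hAIAW hCCON hIDWS r.classes r rfl x y hs he).1
  · rintro rfl
    intro r r' L G W hL hr hr' hG x y hp
    have hp' : lexGE (thetaDot r x) (thetaDot r y) ∧ ¬ lexGE (thetaDot r y) (thetaDot r x) := hp
    rw [thetaDot_eq, thetaDot_eq, hr] at hp'
    have hkey := slexcel_idws_aux hG L hp'
    constructor
    · show lexGE (thetaDot r' x) (thetaDot r' y)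
      rw [thetaDot_eq, thetaDot_eq, hr']
      exact hkey.1
    · show ¬ lexGE (thetaDot r' y) (thetaDot r' x)
      rw [thetaDot_eq, thetaDot_eq, hr']
      exact hkey.2
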